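/- Let c_1, c_a, y, q be reals with 0 < c_1 < c_a, y ≥ 0 and 0 < q ≤ 1, and set p = q·(y + c_1)/(y + c_a), so p < q. If reals v_1, v_2 satisfy v_1 − v_2 ≥ (c_a − c_1)/(q − p), then q·v_1 + (1−q)·v_2 − c_a ≥ v_2 + y. In particular, if additionally v_2 ≥ 0, then q·v_1 + (1−q)·v_2 − c_a ≥ 0. -/

import Mathlib

/-- Let `0 < c1 < ca`, `y ≥ 0`, `0 < q ≤ 1`, and
`p = q (y + c1)/(y + ca)`, so `p < q`. If `v1 - v2 ≥ (ca - c1)/(q - p)` (the incentive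
constraint in favor of the costlier action), then
`q v1 + (1 - q) v2 - ca ≥ v2 + y`; in particular, if moreover `v2 ≥ 0`, then
`q v1 + (1 - q) v2 - ca ≥ 0`. -/
theorem incentive_constraint_implies_ir (c1 ca y q : ℝ)
    (hc1 : 0 < c1) (hc1a : c1 < ca) (hy : 0 ≤ y) (hq0 : 0 < q) (hq1 : q ≤ 1)
    (p : ℝ) (hp : p = q * (y + c1) / (y + ca))
    (v1 v2 : ℝ) (hIC : (ca - c1) / (q - p) ≤ v1 - v2) :
    p < q ∧ v2 + y ≤ q * v1 + (1 - q) * v2 - ca ∧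
      (0 ≤ v2 → 0 ≤ q * v1 + (1 - q) * v2 - ca) := by
  have hD : 0 < y + ca := by linarith
  have hqp : q - p = q * (ca - c1) / (y + ca) := by
    rw [hp]; field_simp; ring
  have hplt : p < q := by
    have : 0 < q * (ca - c1) / (y + ca) := div_pos (by nlinarith) hD
    linarith [hqp ▸ this]
  have hca : ca - c1 ≠ 0 := by linarith
  have hfrac : (ca - c1) / (q - p) = (y + ca) / q := by
    rw [hqp]
    field_simp
  have hkey : (y + ca) / q ≤ v1 - v2 := hfrac ▸ hIC
  have h2 : y + ca ≤ q * (v1 - v2) := by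
    rw [div_le_iff₀ hq0] at hkey; linarith [hkey]
  have hmain : v2 + y ≤ q * v1 + (1 - q) * v2 - ca := by nlinarith
  exact ⟨hplt, hmain, fun hv2 => by linarith⟩
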